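/- Along any trajectory of the system ẋ₁ = 0, ẋ₂ = −(2x₂ + u)/(1 + x₁²), the function V(x) = x₂²/2 satisfies V(x(t)) ≤ max{ V(x(0)) e^{−t/(1 + x₁(0)²)}, ‖u‖_∞² } for all t ≥ 0. -/

import Mathlib

/-- Along any trajectory of `ẋ₁ = 0`, `ẋ₂ = −(2x₂ + u)/(1 + x₁²)`, the function
`V(x) = x₂²/2` satisfies `V(x(t)) ≤ max {V(x(0)) e^{−t/(1+x₁(0)²)}, ‖u‖∞²}` for `t ≥ 0`. -/
theorem stmt8 (x₁ x₂ u : ℝ → ℝ) (U : ℝ)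
    (hU : ∀ t : ℝ, 0 ≤ t → |u t| ≤ U)
    (hx₁ : ∀ t : ℝ, 0 ≤ t → HasDerivAt x₁ 0 t)
    (hx₂ : ∀ t : ℝ, 0 ≤ t → HasDerivAt x₂ (-(2 * x₂ t + u t) / (1 + (x₁ t) ^ 2)) t) :
    ∀ t : ℝ, 0 ≤ t →
      (x₂ t) ^ 2 / 2 ≤
        max (((x₂ 0) ^ 2 / 2) * Real.exp (-t / (1 + (x₁ 0) ^ 2))) (U ^ 2) := by
  intro t ht
  set a : ℝ := 1 + (x₁ 0) ^ 2 with ha_def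
  have ha : 0 < a := by positivity
  have hUnn : 0 ≤ U := le_trans (abs_nonneg _) (hU 0 le_rfl)
  -- x₁ is constant on [0, ∞)
  have hx1c : ∀ s : ℝ, 0 ≤ s → x₁ s = x₁ 0 := by
    intro s hs
    have h := constant_of_has_deriv_right_zero (f := x₁) (a := 0) (b := s)
      (fun r hr => ((hx₁ r hr.1).continuousAt).continuousWithinAt)
      (fun r hr => (hx₁ r hr.1).hasDerivWithinAt)
    exact h s (Set.right_mem_Icc.2 hs)
  set V : ℝ → ℝ := fun s => (x₂ s) ^ 2 / 2 with hVdef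
  set V' : ℝ → ℝ := fun s => x₂ s * (-(2 * x₂ s + u s) / a) with hV'def
  have hVd : ∀ s : ℝ, 0 ≤ s → HasDerivAt V (V' s) s := by
    intro s hs
    have h := hx₂ s hs
    rw [hx1c s hs] at h
    have h2 : HasDerivAt (fun s => x₂ s ^ 2 / 2) _ s := (h.fun_pow 2).div_const 2
    convert h2 using 1
    simp [hV'def]
    ring
  by_cases hcase : ∃ s, 0 ≤ s ∧ s ≤ t ∧ V s ≤ U ^ 2
  · -- once below U², stays below U²
    obtain ⟨s, hs0, hst, hVs⟩ := hcase
    have key : V t ≤ U ^ 2 := by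
      refine le_of_forall_pos_le_add ?_
      intro ε hε
      have hmain := image_le_of_deriv_right_lt_deriv_boundary
        (f := V) (f' := V') (a := s) (b := t)
        (fun r hr => ((hVd r (le_trans hs0 hr.1)).continuousAt).continuousWithinAt)
        (fun r hr => (hVd r (le_trans hs0 hr.1)).hasDerivWithinAt)
        (B := fun _ => U ^ 2 + ε) (B' := fun _ => 0)
        (show V s ≤ U ^ 2 + ε by linarith)
        (fun r => hasDerivAt_const r _)
        ?_
      · exact hmain (Set.right_mem_Icc.2 hst)
      · intro r hr hVr
        have hr0 : 0 ≤ r := le_trans hs0 hr.1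
        have hur := abs_le.1 (hU r hr0)
        have h1 : (x₂ r) ^ 2 = 2 * U ^ 2 + 2 * ε := by
          have : (x₂ r) ^ 2 / 2 = U ^ 2 + ε := hVr
          linarith
        have hpos : 0 < x₂ r * (2 * x₂ r + u r) := by
          nlinarith [sq_nonneg (x₂ r + u r),
            mul_nonneg (by linarith [hur.1] : (0:ℝ) ≤ U + u r)
              (by linarith [hur.2] : (0:ℝ) ≤ U - u r)]
        have hEq : V' r = -(x₂ r * (2 * x₂ r + u r)) / a := by
          simp only [hV'def]; ring
        rw [hEq]
        exact div_neg_of_neg_of_pos (by linarith) ha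
    exact le_trans key (le_max_right _ _)
  · -- V stays above U² on [0, t] : exponential decay
    push_neg at hcase
    have hB' : ∀ r : ℝ, HasDerivAt (fun s => V 0 * Real.exp (-s / a))
        (V 0 * (Real.exp (-r / a) * (-1 / a))) r := by
      intro r
      have hlin : HasDerivAt (fun s : ℝ => -s / a) (-1 / a) r := by
        simpa using ((hasDerivAt_id r).neg.div_const a)
      exact (hlin.exp).const_mul (V 0)
    have hmain := image_le_of_deriv_right_lt_deriv_boundary
      (f := V) (f' := V') (a := 0) (b := t)
      (fun r hr => ((hVd r hr.1).continuousAt).continuousWithinAt)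
      (fun r hr => (hVd r hr.1).hasDerivWithinAt)
      (B := fun s => V 0 * Real.exp (-s / a))
      (B' := fun r => V 0 * (Real.exp (-r / a) * (-1 / a)))
      (by norm_num)
      hB'
      ?_
    · have hfin : V t ≤ V 0 * Real.exp (-t / a) := hmain (Set.right_mem_Icc.2 ht)
      exact le_trans hfin (le_max_left _ _)
    · intro r hr hEq
      have hr0 : 0 ≤ r := hr.1
      have hgt : U ^ 2 < V r := hcase r hr0 hr.2.le
      have hur := abs_le.1 (hU r hr0)
      have hgt' : 2 * U ^ 2 < (x₂ r) ^ 2 := by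
        have : U ^ 2 < (x₂ r) ^ 2 / 2 := hgt
        linarith
      have hrhs : V 0 * (Real.exp (-r / a) * (-1 / a)) = -((x₂ r) ^ 2 / 2) / a := by
        have : V 0 * Real.exp (-r / a) = (x₂ r) ^ 2 / 2 := hEq.symm
        calc V 0 * (Real.exp (-r / a) * (-1 / a))
            = (V 0 * Real.exp (-r / a)) * (-1 / a) := by ring
          _ = ((x₂ r) ^ 2 / 2) * (-1 / a) := by rw [this]
          _ = -((x₂ r) ^ 2 / 2) / a := by ring
      have hlhs : V' r = -(x₂ r * (2 * x₂ r + u r)) / a := by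
        simp only [hV'def]; ring
      show V' r < V 0 * (Real.exp (-r / a) * (-1 / a))
      rw [hrhs, hlhs, div_lt_div_iff_of_pos_right ha]
      nlinarith [sq_nonneg (x₂ r + u r),
        mul_nonneg (by linarith [hur.1] : (0:ℝ) ≤ U + u r)
          (by linarith [hur.2] : (0:ℝ) ≤ U - u r)]
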